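/- Let 𝕜 be an RCLike field (ℝ or ℂ), E a finite-dimensional inner product space over 𝕜, X : Fin n → Submodule 𝕜 E, and Z a submodule of E that commutes with each X i in the sense that X i = (X i ⊓ Z) ⊔ (X i ⊓ Zᗮ) for every i. Then for every quantum-logic term t in n variables, the Z-relative value satisfies evalRel Z t (fun i => X i ⊓ Z) = (eval t X) ⊓ Z. -/

import Mathlib

/-- A quantum-logic term in `n` variables. -/
inductive Term (n : ℕ) : Type
  | var : Fin n → Term n
  | neg : Term n → Term n
  | inf : Term n → Term n → Term n
  | sup : Term n → Term n → Term n

/-- The value of a quantum-logic term under an assignment of subspaces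
to the variables.  Negation is interpreted as orthogonal complement. -/
def Term.eval {n : ℕ} {𝕜 E : Type*} [RCLike 𝕜] [NormedAddCommGroup E]
    [InnerProductSpace 𝕜 E] : Term n → (Fin n → Submodule 𝕜 E) → Submodule 𝕜 E
  | .var i, U => U i
  | .neg t, U => (t.eval U)ᗮ
  | .inf s t, U => s.eval U ⊓ t.eval U
  | .sup s t, U => s.eval U ⊔ t.eval U

/-- The `Z`-relative value of a quantum-logic term: negation is interpreted
inside `Z`, i.e. as `Z ⊓ ·ᗮ`. -/
def Term.evalRel {n : ℕ} {𝕜 E : Type*} [RCLike 𝕜] [NormedAddCommGroup E]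
    [InnerProductSpace 𝕜 E] (Z : Submodule 𝕜 E) :
    Term n → (Fin n → Submodule 𝕜 E) → Submodule 𝕜 E
  | .var i, U => U i
  | .neg t, U => Z ⊓ (t.evalRel Z U)ᗮ
  | .inf s t, U => s.evalRel Z U ⊓ t.evalRel Z U
  | .sup s t, U => s.evalRel Z U ⊔ t.evalRel Z U

section Helpers

variable {𝕜 E : Type*} [RCLike 𝕜] [NormedAddCommGroup E]
    [InnerProductSpace 𝕜 E] [FiniteDimensional 𝕜 E] (Z : Submodule 𝕜 E)

private lemma decompZ {W : Submodule 𝕜 E} (h : W = (W ⊓ Z) ⊔ (W ⊓ Zᗮ)) {x : E} (hx : x ∈ W) :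
    ∃ a b, a ∈ W ⊓ Z ∧ b ∈ W ⊓ Zᗮ ∧ x = a + b := by
  rw [h] at hx
  rcases Submodule.mem_sup.1 hx with ⟨a, ha, b, hb, rfl⟩
  exact ⟨a, b, ha, hb, rfl⟩

private lemma neg_infZ {W : Submodule 𝕜 E} (h : W = (W ⊓ Z) ⊔ (W ⊓ Zᗮ)) :
    Z ⊓ (W ⊓ Z)ᗮ = Wᗮ ⊓ Z := by
  apply le_antisymm
  · rintro x ⟨hxZ, hxO⟩
    refine ⟨(Submodule.mem_orthogonal _ _).2 ?_, hxZ⟩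
    intro w hw
    rcases decompZ Z h hw with ⟨a, b, ha, hb, rfl⟩
    have h1 : (inner 𝕜 a x : 𝕜) = 0 := hxO a ha
    have h2 : (inner 𝕜 b x : 𝕜) = 0 :=
      (Submodule.mem_orthogonal' _ _).1 hb.2 x hxZ
    simp [inner_add_left, h1, h2]
  · rintro x ⟨hxO, hxZ⟩
    exact ⟨hxZ, fun w hw => hxO w hw.1⟩

private lemma neg_commZ {W : Submodule 𝕜 E} (h : W = (W ⊓ Z) ⊔ (W ⊓ Zᗮ)) :
    Wᗮ = (Wᗮ ⊓ Z) ⊔ (Wᗮ ⊓ Zᗮ) := by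
  refine le_antisymm ?_ (sup_le inf_le_left inf_le_left)
  intro x hx
  have htop : Z ⊔ Zᗮ = ⊤ := Submodule.sup_orthogonal_of_hasOrthogonalProjection
  have hxtop : x ∈ Z ⊔ Zᗮ := by rw [htop]; trivial
  rcases Submodule.mem_sup.1 hxtop with ⟨x₁, hx₁, x₂, hx₂, rfl⟩
  have hx₁W : x₁ ∈ Wᗮ := by
    refine (Submodule.mem_orthogonal _ _).2 ?_
    intro w hw
    rcases decompZ Z h hw with ⟨a, b, ha, hb, rfl⟩
    have hb1 : (inner 𝕜 b x₁ : 𝕜) = 0 :=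
      (Submodule.mem_orthogonal' _ _).1 hb.2 x₁ hx₁
    have ha2 : (inner 𝕜 a x₂ : 𝕜) = 0 :=
      (Submodule.mem_orthogonal _ _).1 hx₂ a ha.2
    have ha0 : (inner 𝕜 a (x₁ + x₂) : 𝕜) = 0 :=
      (Submodule.mem_orthogonal _ _).1 hx a ha.1
    have ha1 : (inner 𝕜 a x₁ : 𝕜) = 0 := by
      have := ha0
      rw [inner_add_right, ha2, add_zero] at this
      exact this
    simp [inner_add_left, ha1, hb1]
  have hx₂W : x₂ ∈ Wᗮ := by
    have : x₂ = (x₁ + x₂) - x₁ := by abel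
    rw [this]
    exact Submodule.sub_mem _ hx hx₁W
  exact Submodule.mem_sup.2 ⟨x₁, ⟨hx₁W, hx₁⟩, x₂, ⟨hx₂W, hx₂⟩, rfl⟩

private lemma sup_infZ {W₁ W₂ : Submodule 𝕜 E} (h₁ : W₁ = (W₁ ⊓ Z) ⊔ (W₁ ⊓ Zᗮ))
    (h₂ : W₂ = (W₂ ⊓ Z) ⊔ (W₂ ⊓ Zᗮ)) :
    (W₁ ⊔ W₂) ⊓ Z = (W₁ ⊓ Z) ⊔ (W₂ ⊓ Z) := by
  refine le_antisymm ?_ (sup_le (inf_le_inf_right Z le_sup_left)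
    (inf_le_inf_right Z le_sup_right))
  rintro x ⟨hxW, hxZ⟩
  rcases Submodule.mem_sup.1 hxW with ⟨u, hu, v, hv, rfl⟩
  rcases decompZ Z h₁ hu with ⟨a₁, a₂, ha₁, ha₂, rfl⟩
  rcases decompZ Z h₂ hv with ⟨b₁, b₂, hb₁, hb₂, rfl⟩
  have hmem : a₂ + b₂ ∈ Z ⊓ Zᗮ := by
    constructor
    · have : a₂ + b₂ = (a₁ + a₂ + (b₁ + b₂)) - (a₁ + b₁) := by abel
      rw [this]
      exact Submodule.sub_mem _ hxZ (Submodule.add_mem _ ha₁.2 hb₁.2)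
    · exact Submodule.add_mem _ ha₂.2 hb₂.2
  have h0 : a₂ + b₂ = 0 := by
    have := Z.orthogonal_disjoint.eq_bot
    rw [this] at hmem
    exact hmem
  have hxeq : a₁ + a₂ + (b₁ + b₂) = a₁ + b₁ := by
    rw [show a₁ + a₂ + (b₁ + b₂) = (a₁ + b₁) + (a₂ + b₂) by abel, h0, add_zero]
  rw [hxeq]
  exact Submodule.mem_sup.2 ⟨a₁, ⟨ha₁.1, ha₁.2⟩, b₁, ⟨hb₁.1, hb₁.2⟩, rfl⟩

private lemma sup_commZ {W₁ W₂ : Submodule 𝕜 E} (h₁ : W₁ = (W₁ ⊓ Z) ⊔ (W₁ ⊓ Zᗮ))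
    (h₂ : W₂ = (W₂ ⊓ Z) ⊔ (W₂ ⊓ Zᗮ)) :
    W₁ ⊔ W₂ = ((W₁ ⊔ W₂) ⊓ Z) ⊔ ((W₁ ⊔ W₂) ⊓ Zᗮ) := by
  refine le_antisymm ?_ (sup_le inf_le_left inf_le_left)
  refine sup_le ?_ ?_
  · conv_lhs => rw [h₁]
    exact sup_le (le_sup_of_le_left (inf_le_inf_right _ le_sup_left))
      (le_sup_of_le_right (inf_le_inf_right _ le_sup_left))
  · conv_lhs => rw [h₂]
    exact sup_le (le_sup_of_le_left (inf_le_inf_right _ le_sup_right))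
      (le_sup_of_le_right (inf_le_inf_right _ le_sup_right))

private lemma inf_commZ {W₁ W₂ : Submodule 𝕜 E} (h₁ : W₁ = (W₁ ⊓ Z) ⊔ (W₁ ⊓ Zᗮ))
    (h₂ : W₂ = (W₂ ⊓ Z) ⊔ (W₂ ⊓ Zᗮ)) :
    W₁ ⊓ W₂ = ((W₁ ⊓ W₂) ⊓ Z) ⊔ ((W₁ ⊓ W₂) ⊓ Zᗮ) := by
  refine le_antisymm ?_ (sup_le inf_le_left inf_le_left)
  rintro x ⟨hx₁, hx₂⟩
  rcases decompZ Z h₁ hx₁ with ⟨a₁, a₂, ha₁, ha₂, hxa⟩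
  rcases decompZ Z h₂ hx₂ with ⟨b₁, b₂, hb₁, hb₂, hxb⟩
  have key : a₁ - b₁ ∈ Z ⊓ Zᗮ := by
    constructor
    · exact Submodule.sub_mem _ ha₁.2 hb₁.2
    · have : a₁ - b₁ = b₂ - a₂ := by
        have := hxa.symm.trans hxb
        linear_combination (norm := abel) this
      rw [this]
      exact Submodule.sub_mem _ hb₂.2 ha₂.2
  have hab : a₁ = b₁ := by
    have hbot := Z.orthogonal_disjoint.eq_bot
    rw [hbot] at key
    exact sub_eq_zero.1 key
  have hab2 : a₂ = b₂ := by
    have h := hxa.symm.trans hxb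
    rw [hab] at h
    exact add_left_cancel h
  rw [hxa]
  refine Submodule.mem_sup.2 ⟨a₁, ⟨⟨ha₁.1, ?_⟩, ha₁.2⟩, a₂, ⟨⟨ha₂.1, ?_⟩, ha₂.2⟩, rfl⟩
  · rw [hab]; exact hb₁.1
  · rw [hab2]; exact hb₂.1
end Helpers

theorem evalRel_inf_commuting {n : ℕ} {𝕜 E : Type*} [RCLike 𝕜]
    [NormedAddCommGroup E] [InnerProductSpace 𝕜 E] [FiniteDimensional 𝕜 E]
    (X : Fin n → Submodule 𝕜 E) (Z : Submodule 𝕜 E)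
    (hcomm : ∀ i, X i = (X i ⊓ Z) ⊔ (X i ⊓ Zᗮ)) (t : Term n) :
    t.evalRel Z (fun i => X i ⊓ Z) = t.eval X ⊓ Z := by
  suffices h : t.evalRel Z (fun i => X i ⊓ Z) = t.eval X ⊓ Z ∧
      t.eval X = (t.eval X ⊓ Z) ⊔ (t.eval X ⊓ Zᗮ) from h.1
  induction t with
  | var i => exact ⟨rfl, hcomm i⟩
  | neg t ih =>
    refine ⟨?_, neg_commZ Z ih.2⟩
    show Z ⊓ (t.evalRel Z (fun i => X i ⊓ Z))ᗮ = (t.eval X)ᗮ ⊓ Z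
    rw [ih.1]
    exact neg_infZ Z ih.2
  | inf s t ihs iht =>
    constructor
    · show s.evalRel Z _ ⊓ t.evalRel Z _ = (s.eval X ⊓ t.eval X) ⊓ Z
      rw [ihs.1, iht.1]
      ext x
      simp only [Submodule.mem_inf]
      tauto
    · exact inf_commZ Z ihs.2 iht.2
  | sup s t ihs iht =>
    constructor
    · show s.evalRel Z _ ⊔ t.evalRel Z _ = (s.eval X ⊔ t.eval X) ⊓ Z
      rw [ihs.1, iht.1]
      exact (sup_infZ Z ihs.2 iht.2).symm
    · exact sup_commZ Z ihs.2 iht.2
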